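/- arXiv:2312.07215 — 2 statements merged into one kernel-verified Lean document; each statement's English description precedes it below -/
import Mathlib

section
/- Each energy-stepping velocity update (diffraction or reflection) across a jump of ΔV ∈ {h, −h, 0} in the terraced potential exactly conserves the total discrete energy H_h(q, q̇) = ½ q̇ᵀ M q̇ + V_h(q): the kinetic energy changes by exactly −ΔV_effective, where ΔV_effective is the actual potential jump realized (ΔV for diffraction, 0 for reflection). -/
open Matrix

private lemma es_dot_symm {d : ℕ} {M : Matrix (Fin d) (Fin d) ℝ} (hM : M.PosDef)
    (a b : Fin d → ℝ) : a ⬝ᵥ M.mulVec b = b ⬝ᵥ M.mulVec a := by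
  rw [Matrix.dotProduct_mulVec, ← Matrix.mulVec_transpose]
  have hT : Mᵀ = M := by
    have := hM.1; rwa [Matrix.IsHermitian, conjTranspose_eq_transpose_of_trivial] at this
  rw [hT, dotProduct_comm]

private lemma es_expand {d : ℕ} {M : Matrix (Fin d) (Fin d) ℝ} (hM : M.PosDef)
    (nv qm : Fin d → ℝ) (lam : ℝ) :
    (qm + lam • M⁻¹.mulVec nv) ⬝ᵥ M.mulVec (qm + lam • M⁻¹.mulVec nv)
      = qm ⬝ᵥ M.mulVec qm + 2 * lam * (qm ⬝ᵥ nv)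
        + lam ^ 2 * (nv ⬝ᵥ M⁻¹.mulVec nv) := by
  have hinv : M.mulVec (M⁻¹.mulVec nv) = nv := by
    rw [Matrix.mulVec_mulVec,
      Matrix.mul_nonsing_inv _ (isUnit_iff_ne_zero.mpr hM.det_pos.ne'), Matrix.one_mulVec]
  have hsym : (M⁻¹.mulVec nv) ⬝ᵥ M.mulVec qm = qm ⬝ᵥ nv := by
    rw [es_dot_symm hM, hinv]
  rw [Matrix.mulVec_add, Matrix.mulVec_smul, hinv, add_dotProduct,
    smul_dotProduct, dotProduct_add, dotProduct_add,
    dotProduct_smul, dotProduct_smul, hsym]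
  simp only [smul_eq_mul, dotProduct_comm (M⁻¹.mulVec nv) nv]
  ring

/-- Each energy-stepping velocity update (downhill diffraction, uphill
diffraction, or reflection) exactly conserves the total discrete energy
`H_h(q,q̇) = ½ q̇ᵀMq̇ + V_h(q)`: the kinetic energy changes by exactly
`−ΔV_effective`, where the effective potential jump is `−h` for downhill
diffraction, `h` for uphill diffraction, and `0` for reflection. -/
theorem energy_stepping_update_conserves_energy
    (d : ℕ) (M : Matrix (Fin d) (Fin d) ℝ) (hM : M.PosDef)
    (nv qm : Fin d → ℝ) (hnv : nv ≠ 0) (h : ℝ) (hh : 0 < h)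
    (c : ℝ) (hc : c = nv ⬝ᵥ M⁻¹.mulVec nv) :
    -- downhill diffraction: ΔV_effective = −h
    (∀ qp : Fin d → ℝ,
      qp = qm + ((-(qm ⬝ᵥ nv) - Real.sqrt ((qm ⬝ᵥ nv) ^ 2 + 2 * h * c)) / c)
          • M⁻¹.mulVec nv →
      (1 / 2) * (qp ⬝ᵥ M.mulVec qp) = (1 / 2) * (qm ⬝ᵥ M.mulVec qm) - (-h)) ∧
    -- uphill diffraction: ΔV_effective = h
    (∀ qp : Fin d → ℝ, (qm ⬝ᵥ nv) ^ 2 > 2 * h * c →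
      qp = qm + ((-(qm ⬝ᵥ nv) + Real.sqrt ((qm ⬝ᵥ nv) ^ 2 - 2 * h * c)) / c)
          • M⁻¹.mulVec nv →
      (1 / 2) * (qp ⬝ᵥ M.mulVec qp) = (1 / 2) * (qm ⬝ᵥ M.mulVec qm) - h) ∧
    -- reflection: ΔV_effective = 0
    (∀ qp : Fin d → ℝ, (qm ⬝ᵥ nv) ^ 2 < 2 * h * c →
      qp = qm - (2 * (qm ⬝ᵥ nv) / c) • M⁻¹.mulVec nv →
      (1 / 2) * (qp ⬝ᵥ M.mulVec qp) = (1 / 2) * (qm ⬝ᵥ M.mulVec qm) - 0) := by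
  have hcpos : 0 < c := by
    rw [hc]; simpa using (hM.inv).dotProduct_mulVec_pos hnv
  have hc0 : c ≠ 0 := hcpos.ne'
  set a := qm ⬝ᵥ nv with ha
  refine ⟨?_, ?_, ?_⟩
  · intro qp hqp
    subst hqp
    rw [es_expand hM, ← hc]
    have hnn : (0:ℝ) ≤ a ^ 2 + 2 * h * c := by positivity
    have hs : Real.sqrt (a ^ 2 + 2 * h * c) ^ 2 = a ^ 2 + 2 * h * c :=
      Real.sq_sqrt hnn
    field_simp
    nlinarith [hs]
  · intro qp hgt hqp
    subst hqp
    rw [es_expand hM, ← hc]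
    have hnn : (0:ℝ) ≤ a ^ 2 - 2 * h * c := by linarith
    have hs : Real.sqrt (a ^ 2 - 2 * h * c) ^ 2 = a ^ 2 - 2 * h * c :=
      Real.sq_sqrt hnn
    field_simp
    nlinarith [hs]
  · intro qp _ hqp
    subst hqp
    rw [sub_eq_add_neg, ← neg_smul, es_expand hM, ← hc]
    field_simp
    ring
end

section
/- The uphill diffraction update is reversed by the downhill diffraction update: if (v·n)² > 2h nᵀM⁻¹n and w = v + λ₊(v,n)M⁻¹n is the uphill update, then applying the downhill update with normal −n to w recovers v (time reversibility across an energy step). -/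
open Matrix

/-- Time reversibility across an energy step: the uphill diffraction update
(with normal `n`, in the direction of advance `v·n > 0`) is reversed by the
downhill diffraction update with normal `−n`. -/
theorem uphill_reversed_by_downhill
    (d : ℕ) (M : Matrix (Fin d) (Fin d) ℝ) (hM : M.PosDef)
    (nv v : Fin d → ℝ) (hnv : nv ≠ 0) (h : ℝ) (hh : 0 < h)
    (hadv : 0 < v ⬝ᵥ nv)
    (htrans : (v ⬝ᵥ nv) ^ 2 > 2 * h * (nv ⬝ᵥ M⁻¹.mulVec nv))
    (lamPlus : (Fin d → ℝ) → (Fin d → ℝ) → ℝ)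
    (hlamPlus : ∀ u m, lamPlus u m =
      (-(u ⬝ᵥ m) + Real.sqrt ((u ⬝ᵥ m) ^ 2 - 2 * h * (m ⬝ᵥ M⁻¹.mulVec m))) /
        (m ⬝ᵥ M⁻¹.mulVec m))
    (lamMinus : (Fin d → ℝ) → (Fin d → ℝ) → ℝ)
    (hlamMinus : ∀ u m, lamMinus u m =
      (-(u ⬝ᵥ m) - Real.sqrt ((u ⬝ᵥ m) ^ 2 + 2 * h * (m ⬝ᵥ M⁻¹.mulVec m))) /
        (m ⬝ᵥ M⁻¹.mulVec m))
    (w : Fin d → ℝ)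
    (hw : w = v + lamPlus v nv • M⁻¹.mulVec nv) :
    w + lamMinus w (-nv) • M⁻¹.mulVec (-nv) = v := by

  have hq0 : 0 < nv ⬝ᵥ M⁻¹.mulVec nv := by
    simpa using hM.inv.dotProduct_mulVec_pos hnv
  set a := v ⬝ᵥ nv with ha
  set q := nv ⬝ᵥ M⁻¹.mulVec nv with hq
  have hnonneg : 0 ≤ a ^ 2 - 2 * h * q := by linarith
  set s := Real.sqrt (a ^ 2 - 2 * h * q) with hs
  have hs2 : s ^ 2 = a ^ 2 - 2 * h * q := Real.sq_sqrt hnonneg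
  have hcomm : (M⁻¹.mulVec nv) ⬝ᵥ nv = q := by
    rw [dotProduct_comm]
  have hwn : w ⬝ᵥ nv = s := by
    rw [hw, add_dotProduct, smul_dotProduct, hcomm, hlamPlus, ← ha, ← hq, ← hs]
    rw [smul_eq_mul, div_mul_cancel₀ _ hq0.ne']
    ring
  have hneg : (-nv) ⬝ᵥ M⁻¹.mulVec (-nv) = q := by
    rw [Matrix.mulVec_neg, neg_dotProduct, dotProduct_neg, neg_neg]
  have hlm : lamMinus w (-nv) = (s - a) / q := by
    rw [hlamMinus, hneg, dotProduct_neg, hwn]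
    have : s ^ 2 + 2 * h * q = a ^ 2 := by linarith
    rw [neg_sq, this, Real.sqrt_sq hadv.le]
    ring
  have hlp : lamPlus v nv = (-a + s) / q := by
    rw [hlamPlus, ← ha, ← hq, ← hs]
  rw [hlm, hw, hlp, Matrix.mulVec_neg, smul_neg]
  have hc : (s - a) / q = (-a + s) / q := by ring
  rw [hc, add_assoc, add_neg_cancel, add_zero]
end
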